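/- Let p be an odd prime. The only word w of length at most 2p+1 in the alphabet {μ, ε, ρ^k, φ^k} satisfying the admissibility rules and having total degree 4p^k for some k ≥ 0 is w = ρ^k ε μ. -/

import Mathlib

/-!
STATEMENT 6: For an odd prime `p`, the only admissible word `w` of length at
most `2p+1` with total degree `4p^k` for some `k ≥ 0` is `w = ρ^k ε μ`.
-/

/-- Words in the alphabet `{μ, ε, ρ^k, φ^k}`, read right-to-left as
constructor applications. -/
inductive BWord : Type
  | mu : BWord
  | e : BWord → BWord
  | rho : ℕ → BWord → BWord
  | phi : ℕ → BWord → BWord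

namespace BWord

/-- Admissibility: the rightmost letter is `μ`; anything directly left of `μ`
is `ε`; left of an `ε` must be a `ρ^k`; left of a `ρ^k` or a `φ^k` must be an
`ε` or a `φ^j`. -/
def Adm : BWord → Prop
  | mu => True
  | e w => Adm w ∧ (w = mu ∨ (∃ i w', w = rho i w') ∨ (∃ i w', w = phi i w'))
  | rho _ w => Adm w ∧ ∃ w', w = e w'
  | phi _ w => Adm w ∧ ((∃ i w', w = rho i w') ∨ (∃ i w', w = phi i w'))

/-- The length (number of letters) of a word. -/
def len : BWord → ℕ
  | mu => 1
  | e w => len w + 1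
  | rho _ w => len w + 1
  | phi _ w => len w + 1

/-- Total degree: `|μ| = 2`, `|εw| = 1 + |w|`, `|ρ^i w| = p^i (1 + |w|)`,
`|φ^ℓ w| = p^ℓ (2 + p|w|)`. -/
def deg (p : ℕ) : BWord → ℕ
  | mu => 2
  | e w => 1 + deg p w
  | rho i w => p ^ i * (1 + deg p w)
  | phi l w => p ^ l * (2 + p * deg p w)

end BWord

open BWord in
lemma bword_two_le_deg (p : ℕ) (hp1 : 1 ≤ p) : ∀ w : BWord, 2 ≤ deg p w := by
  intro w
  induction w with
  | mu => simp [deg]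
  | e w ih => simp only [deg]; omega
  | rho i w ih =>
      have hpi : 1 ≤ p ^ i := Nat.one_le_pow _ _ hp1
      simp only [deg]
      calc 2 ≤ 1 * (1 + deg p w) := by omega
        _ ≤ p ^ i * (1 + deg p w) := Nat.mul_le_mul_right _ hpi
  | phi l w ih =>
      have hpl : 1 ≤ p ^ l := Nat.one_le_pow _ _ hp1
      simp only [deg]
      calc 2 ≤ 1 * (2 + p * deg p w) := by omega
        _ ≤ p ^ l * (2 + p * deg p w) := Nat.mul_le_mul_right _ hpl

open BWord in
lemma bword_one_le_len : ∀ w : BWord, 1 ≤ len w := by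
  intro w; cases w <;> simp [len]

open BWord in
lemma bword_key (p : ℕ) (hp : p.Prime) (hp3 : 3 ≤ p) :
    ∀ (w : BWord) (m k : ℕ), Adm w → m + len w ≤ 2 * p + 1 →
      m + deg p w = 4 * p ^ k →
      (m = 0 ∧ w = rho k (e mu)) ∨ (k = 0 ∧ m = 1 ∧ w = e mu) ∨
        (k = 0 ∧ m = 2 ∧ w = mu) := by
  have hp1 : 1 ≤ p := by omega
  have hp0 : 0 < p := hp1
  have hnd2 : ¬ p ∣ 2 := by
    intro h
    have h2 : p ≤ 2 := Nat.le_of_dvd (by norm_num) h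
    omega
  intro w
  induction w with
  | mu =>
      intro m k _ hlen hdeg
      simp only [deg, len] at hdeg hlen
      rcases Nat.eq_zero_or_pos k with rfl | hk
      · right; right
        simp only [pow_zero, mul_one] at hdeg
        exact ⟨rfl, by omega, rfl⟩
      · exfalso
        have h1 : p ≤ p ^ k := by
          calc p = p ^ 1 := (pow_one p).symm
            _ ≤ p ^ k := Nat.pow_le_pow_right hp1 hk
        omega
  | e w' ih =>
      intro m k hadm hlen hdeg
      obtain ⟨hadm', hshape⟩ := hadm
      simp only [deg, len] at hdeg hlen
      have hlen' : (m + 1) + len w' ≤ 2 * p + 1 := by omega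
      have hdeg' : (m + 1) + deg p w' = 4 * p ^ k := by omega
      rcases ih (m + 1) k hadm' hlen' hdeg' with ⟨h0, _⟩ | ⟨hk, hm, hw⟩ | ⟨hk, hm, hw⟩
      · omega
      · exfalso
        rcases hshape with h | ⟨i, w'', h⟩ | ⟨i, w'', h⟩ <;> rw [hw] at h <;> simp at h
      · right; left
        refine ⟨hk, by omega, ?_⟩
        rw [hw]
  | rho i w' ih =>
      intro m k hadm hlen hdeg
      obtain ⟨hadm', w2, rfl⟩ := hadm
      obtain ⟨hadm2, hshape2⟩ := hadm'
      simp only [deg, len] at hdeg hlen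
      -- hdeg : m + p ^ i * (1 + (1 + deg p w2)) = 4 * p ^ k
      set D := deg p w2 with hD
      have hD2 : 2 ≤ D := bword_two_le_deg p hp1 w2
      have hlw2 : 1 ≤ len w2 := bword_one_le_len w2
      have hdeg2 : m + p ^ i * (2 + D) = 4 * p ^ k := by
        rw [show 1 + (1 + D) = 2 + D by omega] at hdeg; exact hdeg
      rcases Nat.eq_zero_or_pos i with rfl | hi
      · -- i = 0 : degree is 1 + deg (e w2) + m
        have hlen' : (m + 1) + len (e w2) ≤ 2 * p + 1 := by simp only [len]; omega
        have hdeg' : (m + 1) + deg p (e w2) = 4 * p ^ k := by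
          simp only [deg]; simp only [pow_zero, one_mul] at hdeg2; omega
        rcases ih (m + 1) k ⟨hadm2, hshape2⟩ hlen' hdeg' with ⟨_, _⟩ | ⟨hk, hm, hw⟩ |
          ⟨_, _, hw⟩
        · omega
        · left
          have hw2 : w2 = mu := by injection hw
          rw [hk, hw2]
          exact ⟨by omega, rfl⟩
        · exfalso; simp at hw
      · -- i ≥ 1
        rcases Nat.eq_zero_or_pos k with rfl | hk
        · exfalso
          have hbig : 3 * 4 ≤ p ^ i * (2 + D) := by
            have h1 : p ≤ p ^ i := by
              calc p = p ^ 1 := (pow_one p).symm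
                _ ≤ p ^ i := Nat.pow_le_pow_right hp1 hi
            exact Nat.mul_le_mul (by omega) (by omega)
          simp only [pow_zero, mul_one] at hdeg2
          omega
        -- k ≥ 1 : p ∣ m
        have hdm : p ∣ m := by
          have h1 : p ∣ p ^ i * (2 + D) := Dvd.dvd.mul_right (dvd_pow_self p hi.ne') _
          have h2 : p ∣ 4 * p ^ k := Dvd.dvd.mul_left (dvd_pow_self p hk.ne') 4
          have h3 : p ∣ 4 * p ^ k - p ^ i * (2 + D) := Nat.dvd_sub h2 h1
          have h4 : 4 * p ^ k - p ^ i * (2 + D) = m := by omega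
          rwa [h4] at h3
        obtain ⟨t, rfl⟩ := hdm
        have ht : t ≤ 1 := by nlinarith
        interval_cases t
        · -- m = 0
          simp only [mul_zero, zero_add] at hdeg2 hlen ⊢
          have hik : i ≤ k := by
            by_contra hik
            push_neg at hik
            have hsplit : p ^ i = p ^ k * p ^ (i - k) := by
              rw [← pow_add]; congr 1; omega
            have hcancel : p ^ (i - k) * (2 + D) = 4 := by
              have hpk : 0 < p ^ k := Nat.pow_pos hp0
              have : p ^ k * (p ^ (i - k) * (2 + D)) = p ^ k * 4 := by
                rw [← mul_assoc, ← hsplit]; omega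
              exact Nat.eq_of_mul_eq_mul_left hpk this
            have h1 : p ≤ p ^ (i - k) := by
              calc p = p ^ 1 := (pow_one p).symm
                _ ≤ p ^ (i - k) := Nat.pow_le_pow_right hp1 (by omega)
            nlinarith
          have hquot : 2 + D = 4 * p ^ (k - i) := by
            have hpi : 0 < p ^ i := Nat.pow_pos hp0
            have hsplit : p ^ k = p ^ i * p ^ (k - i) := by
              rw [← pow_add]; congr 1; omega
            have : p ^ i * (2 + D) = p ^ i * (4 * p ^ (k - i)) := by
              rw [hdeg2, hsplit]; ring
            exact Nat.eq_of_mul_eq_mul_left hpi this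
          have hlen' : 1 + len (e w2) ≤ 2 * p + 1 := by simp only [len]; omega
          have hdeg' : 1 + deg p (e w2) = 4 * p ^ (k - i) := by
            simp only [deg]; omega
          rcases ih 1 (k - i) ⟨hadm2, hshape2⟩ hlen' hdeg' with ⟨h0, _⟩ | ⟨hk', _, hw⟩ |
            ⟨_, h2, _⟩
          · omega
          · left
            have hw2 : w2 = mu := by injection hw
            have hki : k = i := by omega
            rw [hw2, hki]
            exact ⟨trivial, rfl⟩
          · omega
        · -- m = p
          exfalso
          simp only [mul_one] at hdeg2 hlen
          obtain ⟨i', rfl⟩ : ∃ i', i = i' + 1 := ⟨i - 1, by omega⟩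
          obtain ⟨k', rfl⟩ : ∃ k', k = k' + 1 := ⟨k - 1, by omega⟩
          have hkey : 1 + p ^ i' * (2 + D) = 4 * p ^ k' := by
            have h2 : p * (1 + p ^ i' * (2 + D)) = p * (4 * p ^ k') := by
              calc p * (1 + p ^ i' * (2 + D)) = p + p ^ (i' + 1) * (2 + D) := by ring
                _ = 4 * p ^ (k' + 1) := hdeg2
                _ = p * (4 * p ^ k') := by ring
            exact Nat.eq_of_mul_eq_mul_left hp0 h2
          rcases Nat.eq_zero_or_pos i' with rfl | hi'
          · -- i' = 0 : 3 + D = 4 p^{k'}, apply ih with m = 2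
            simp only [pow_zero, one_mul] at hkey
            have hlen' : 2 + len (e w2) ≤ 2 * p + 1 := by simp only [len]; omega
            have hdeg' : 2 + deg p (e w2) = 4 * p ^ k' := by simp only [deg]; omega
            rcases ih 2 k' ⟨hadm2, hshape2⟩ hlen' hdeg' with ⟨h0, _⟩ | ⟨_, h1, _⟩ |
              ⟨_, _, hw⟩
            · omega
            · omega
            · simp at hw
          · -- i' ≥ 1
            rcases Nat.eq_zero_or_pos k' with rfl | hk'
            · have h1 : p ≤ p ^ i' := by
                calc p = p ^ 1 := (pow_one p).symm
                  _ ≤ p ^ i' := Nat.pow_le_pow_right hp1 hi'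
              simp only [pow_zero, mul_one] at hkey
              nlinarith
            · have h1 : p ∣ p ^ i' * (2 + D) :=
                Dvd.dvd.mul_right (dvd_pow_self p hi'.ne') _
              have h2 : p ∣ 4 * p ^ k' := Dvd.dvd.mul_left (dvd_pow_self p hk'.ne') 4
              have h3 : p ∣ 4 * p ^ k' - p ^ i' * (2 + D) := Nat.dvd_sub h2 h1
              have h4 : 4 * p ^ k' - p ^ i' * (2 + D) = 1 := by omega
              rw [h4] at h3
              have := Nat.le_of_dvd (by norm_num) h3
              omega
  | phi l w' ih =>
      intro m k hadm hlen hdeg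
      exfalso
      obtain ⟨hadm', hshape⟩ := hadm
      simp only [deg, len] at hdeg hlen
      set D := deg p w' with hD
      have hD2 : 2 ≤ D := bword_two_le_deg p hp1 w'
      have hlw : 1 ≤ len w' := bword_one_le_len w'
      have hpd : 6 ≤ p * D := Nat.mul_le_mul hp3 hD2
      rcases Nat.eq_zero_or_pos k with rfl | hk
      · have hbig : 8 ≤ p ^ l * (2 + p * D) := by
          calc (8:ℕ) = 1 * 8 := by norm_num
            _ ≤ p ^ l * (2 + p * D) :=
              Nat.mul_le_mul (Nat.one_le_pow _ _ hp0) (by omega)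
        simp only [pow_zero, mul_one] at hdeg
        omega
      rcases Nat.eq_zero_or_pos l with rfl | hl
      · -- l = 0 : m + 2 + p D = 4 p^k
        simp only [pow_zero, one_mul] at hdeg
        obtain ⟨k', rfl⟩ : ∃ k', k = k' + 1 := ⟨k - 1, by omega⟩
        have hdm : p ∣ m + 2 := by
          have h1 : p ∣ p * D := Dvd.dvd.mul_right dvd_rfl _
          have h2 : p ∣ 4 * p ^ (k' + 1) :=
            Dvd.dvd.mul_left (dvd_pow_self p (Nat.succ_ne_zero k')) 4
          have h3 : p ∣ 4 * p ^ (k' + 1) - p * D := Nat.dvd_sub h2 h1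
          have h4 : 4 * p ^ (k' + 1) - p * D = m + 2 := by omega
          rwa [h4] at h3
        obtain ⟨s, hs⟩ := hdm
        have hs1 : 1 ≤ s := by nlinarith
        have hs2 : s ≤ 2 := by nlinarith
        have hkey : s + D = 4 * p ^ k' := by
          have h2 : p * (s + D) = p * (4 * p ^ k') := by
            calc p * (s + D) = p * s + p * D := by ring
              _ = 4 * p ^ (k' + 1) := by rw [← hs]; omega
              _ = p * (4 * p ^ k') := by ring
          exact Nat.eq_of_mul_eq_mul_left hp0 h2
        interval_cases s
        · -- s = 1 : 1 + D = 4 p^{k'}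
          rcases ih 1 k' hadm' (by omega) (by omega) with ⟨h0, _⟩ | ⟨_, _, hw⟩ |
            ⟨_, h2, _⟩
          · omega
          · rcases hshape with ⟨i, w'', h⟩ | ⟨i, w'', h⟩ <;> rw [hw] at h <;> simp at h
          · omega
        · -- s = 2 : 2 + D = 4 p^{k'}
          rcases ih 2 k' hadm' (by omega) (by omega) with ⟨h0, _⟩ | ⟨_, h1, _⟩ |
            ⟨_, _, hw⟩
          · omega
          · omega
          · rcases hshape with ⟨i, w'', h⟩ | ⟨i, w'', h⟩ <;> rw [hw] at h <;> simp at h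
      · -- l ≥ 1
        have hdm : p ∣ m := by
          have h1 : p ∣ p ^ l * (2 + p * D) :=
            Dvd.dvd.mul_right (dvd_pow_self p hl.ne') _
          have h2 : p ∣ 4 * p ^ k := Dvd.dvd.mul_left (dvd_pow_self p hk.ne') 4
          have h3 : p ∣ 4 * p ^ k - p ^ l * (2 + p * D) := Nat.dvd_sub h2 h1
          have h4 : 4 * p ^ k - p ^ l * (2 + p * D) = m := by omega
          rwa [h4] at h3
        obtain ⟨t, rfl⟩ := hdm
        have ht : t ≤ 1 := by nlinarith
        interval_cases t
        · -- m = 0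
          simp only [mul_zero, zero_add] at hdeg hlen
          rcases Nat.lt_or_ge l k with hlk | hlk
          · -- l < k : cancel p^l, get p ∣ 2
            have hquot : 2 + p * D = 4 * p ^ (k - l) := by
              have hpl : 0 < p ^ l := Nat.pow_pos hp0
              have hsplit : p ^ k = p ^ l * p ^ (k - l) := by
                rw [← pow_add]; congr 1; omega
              have : p ^ l * (2 + p * D) = p ^ l * (4 * p ^ (k - l)) := by
                rw [hdeg, hsplit]; ring
              exact Nat.eq_of_mul_eq_mul_left hpl this
            have h1 : p ∣ p * D := Dvd.dvd.mul_right dvd_rfl _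
            have h2 : p ∣ 4 * p ^ (k - l) :=
              Dvd.dvd.mul_left (dvd_pow_self p (by omega : k - l ≠ 0)) 4
            have h3 : p ∣ 4 * p ^ (k - l) - p * D := Nat.dvd_sub h2 h1
            have h4 : 4 * p ^ (k - l) - p * D = 2 := by omega
            rw [h4] at h3
            exact hnd2 h3
          · -- l ≥ k : LHS too big
            have h1 : p ^ k ≤ p ^ l := Nat.pow_le_pow_right hp1 hlk
            have hbig : p ^ k * 8 ≤ p ^ l * (2 + p * D) :=
              Nat.mul_le_mul h1 (by omega)
            have hpk : 1 ≤ p ^ k := Nat.one_le_pow _ _ hp0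
            omega
        · -- m = p
          simp only [mul_one] at hdeg hlen
          obtain ⟨l', rfl⟩ : ∃ l', l = l' + 1 := ⟨l - 1, by omega⟩
          obtain ⟨k', rfl⟩ : ∃ k', k = k' + 1 := ⟨k - 1, by omega⟩
          have hkey : 1 + p ^ l' * (2 + p * D) = 4 * p ^ k' := by
            have h2 : p * (1 + p ^ l' * (2 + p * D)) = p * (4 * p ^ k') := by
              calc p * (1 + p ^ l' * (2 + p * D))
                  = p + p ^ (l' + 1) * (2 + p * D) := by ring
                _ = 4 * p ^ (k' + 1) := hdeg
                _ = p * (4 * p ^ k') := by ring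
            exact Nat.eq_of_mul_eq_mul_left hp0 h2
          rcases Nat.eq_zero_or_pos k' with rfl | hk'
          · -- k' = 0 : p^{l'} (2 + pD) = 3 but 2 + pD ≥ 8
            have hpl : 1 ≤ p ^ l' := Nat.one_le_pow _ _ hp0
            have hbig : 1 * 8 ≤ p ^ l' * (2 + p * D) :=
              Nat.mul_le_mul hpl (by omega)
            simp only [pow_zero, mul_one] at hkey
            omega
          rcases Nat.eq_zero_or_pos l' with rfl | hl'
          · -- l' = 0 : 3 + p D = 4 p^{k'}, so p ∣ 3, p = 3
            simp only [pow_zero, one_mul] at hkey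
            have h1 : p ∣ p * D := Dvd.dvd.mul_right dvd_rfl _
            have h2 : p ∣ 4 * p ^ k' := Dvd.dvd.mul_left (dvd_pow_self p hk'.ne') 4
            have h3 : p ∣ 4 * p ^ k' - p * D := Nat.dvd_sub h2 h1
            have h4 : 4 * p ^ k' - p * D = 3 := by omega
            rw [h4] at h3
            have hple3 : p ≤ 3 := Nat.le_of_dvd (by norm_num) h3
            have hp3' : p = 3 := by omega
            subst hp3'
            obtain ⟨k'', rfl⟩ : ∃ k'', k' = k'' + 1 := ⟨k' - 1, by omega⟩
            have hkey2 : 1 + D = 4 * 3 ^ k'' := by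
              have h2 : 3 * (1 + D) = 3 * (4 * 3 ^ k'') := by
                calc (3:ℕ) * (1 + D) = 3 + 3 * D := by ring
                  _ = 4 * 3 ^ (k'' + 1) := by omega
                  _ = 3 * (4 * 3 ^ k'') := by ring
              exact Nat.eq_of_mul_eq_mul_left (by norm_num) h2
            rcases ih 1 k'' hadm' (by omega) (by omega) with ⟨h0, _⟩ | ⟨_, _, hw⟩ |
              ⟨_, hh2, _⟩
            · omega
            · rcases hshape with ⟨i, w'', h⟩ | ⟨i, w'', h⟩ <;> rw [hw] at h <;> simp at h
            · omega
          · -- l' ≥ 1 : p ∣ 1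
            have h1 : p ∣ p ^ l' * (2 + p * D) :=
              Dvd.dvd.mul_right (dvd_pow_self p hl'.ne') _
            have h2 : p ∣ 4 * p ^ k' := Dvd.dvd.mul_left (dvd_pow_self p hk'.ne') 4
            have h3 : p ∣ 4 * p ^ k' - p ^ l' * (2 + p * D) := Nat.dvd_sub h2 h1
            have h4 : 4 * p ^ k' - p ^ l' * (2 + p * D) = 1 := by omega
            rw [h4] at h3
            have := Nat.le_of_dvd (by norm_num) h3
            omega

theorem stmt6 (p : ℕ) (hp : p.Prime) (hodd : Odd p) :
    ∀ (w : BWord) (k : ℕ), BWord.Adm w → BWord.len w ≤ 2 * p + 1 →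
      BWord.deg p w = 4 * p ^ k → w = BWord.rho k (BWord.e BWord.mu) := by
  have hp3 : 3 ≤ p := by
    obtain ⟨c, hc⟩ := hodd
    have := hp.two_le
    omega
  intro w k hadm hlen hdeg
  rcases bword_key p hp hp3 w 0 k hadm (by omega) (by omega) with ⟨_, hw⟩ |
    ⟨_, h1, _⟩ | ⟨_, h2, _⟩
  · exact hw
  · omega
  · omega
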